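/- Let g, p, q, r be positive integers with gcd(p,q)=1, gcd(p·q, r)=1, and g·q^2 = g^2·p^3 + 62209·p·r^4. Set h1 = 3464p^4r^4 + (q^2-2gp^3)^2, h2 = 3448p^4r^4 - (q^2-2gp^3)^2, h3 = 12p(2gp^3-q^2)r, h4 = 24p^2qr^2. Then gcd(h1, gcd(h2, gcd(h3, h4))) = 1. -/

import Mathlib

theorem stmt_7 (g p q r : ℤ) (hg : 0 < g) (hp : 0 < p) (hq : 0 < q) (hr : 0 < r)
    (h1 : Int.gcd p q = 1) (h2 : Int.gcd (p*q) r = 1)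
    (h3 : g*q^2 = g^2*p^3 + 62209*p*r^4) :
    Int.gcd (3464*p^4*r^4 + (q^2-2*g*p^3)^2)
      (Int.gcd (3448*p^4*r^4 - (q^2-2*g*p^3)^2)
        (Int.gcd (12*p*(2*g*p^3-q^2)*r) (24*p^2*q*r^2))) = 1 := by
  by_contra hne
  obtain ⟨L, hL, hdvd⟩ := Nat.exists_prime_and_dvd hne
  have hLZ : Prime (L : ℤ) := Nat.prime_iff_prime_int.mp hL
  set D : ℤ := q^2 - 2*g*p^3 with hD
  have hLA : (L:ℤ) ∣ 3464*p^4*r^4 + D^2 :=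
    (Int.natCast_dvd_natCast.mpr hdvd).trans (Int.gcd_dvd_left _ _)
  have hLB : (L:ℤ) ∣ 3448*p^4*r^4 - D^2 :=
    (Int.natCast_dvd_natCast.mpr hdvd).trans ((Int.gcd_dvd_right _ _).trans (Int.gcd_dvd_left _ _))
  have hLone : ¬ (L:ℤ) ∣ 1 := by
    intro h
    have := Int.le_of_dvd one_pos h
    have := hL.two_le
    omega
  -- L does not divide p
  have hLp : ¬ (L:ℤ) ∣ p := by
    intro hdp
    have h5 : (L:ℤ) ∣ 3464*p^4*r^4 :=
      (show (3464*p^4*r^4 : ℤ) = 3464*p^3*r^4*p by ring) ▸ hdp.mul_left (3464*p^3*r^4)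
    have hD2 : (L:ℤ) ∣ D^2 := (show (D^2 : ℤ) = (3464*p^4*r^4 + D^2) - 3464*p^4*r^4 by ring) ▸
      dvd_sub hLA h5
    have hLD : (L:ℤ) ∣ D := hLZ.dvd_of_dvd_pow hD2
    have hq2 : (L:ℤ) ∣ q^2 := (show (q^2:ℤ) = D + 2*g*p^3 by rw [hD]; ring) ▸
      dvd_add hLD ((show ((2*g*p^2)*p : ℤ) = 2*g*p^3 by ring) ▸ hdp.mul_left (2*g*p^2))
    have hLq : (L:ℤ) ∣ q := hLZ.dvd_of_dvd_pow hq2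
    have hfin := Int.dvd_gcd hdp hLq
    rw [h1] at hfin
    exact hLone (by exact_mod_cast hfin)
  -- L does not divide r
  have hLr : ¬ (L:ℤ) ∣ r := by
    intro hdr
    have h5 : (L:ℤ) ∣ 3464*p^4*r^4 :=
      (show (3464*p^4*r^4 : ℤ) = 3464*p^4*r^3*r by ring) ▸ hdr.mul_left (3464*p^4*r^3)
    have hD2 : (L:ℤ) ∣ D^2 := (show (D^2 : ℤ) = (3464*p^4*r^4 + D^2) - 3464*p^4*r^4 by ring) ▸
      dvd_sub hLA h5
    have hLD : (L:ℤ) ∣ D := hLZ.dvd_of_dvd_pow hD2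
    -- L ∣ g*(q^2 - g*p^3) = 62209*p*r^4
    have hcurve : (L:ℤ) ∣ g*q^2 - g^2*p^3 := by
      rw [h3]
      exact (show (62209*p*r^3*r : ℤ) = g^2*p^3 + 62209*p*r^4 - g^2*p^3 by ring) ▸
        hdr.mul_left (62209*p*r^3)
    -- g*q^2 - g^2*p^3 = g*D + g*q^2 - g^2*p^3 - g*D ... use: g*D = g*q^2 - 2*g^2*p^3
    -- so g^2*p^3 = g*D - (g*q^2 - 2*g^2*p^3) ... compute: L ∣ g*D and L ∣ g*q^2-g^2*p^3
    have hgD : (L:ℤ) ∣ g*D := hLD.mul_left g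
    have hgp : (L:ℤ) ∣ g^2*p^3 := by
      have := dvd_sub hgD hcurve
      have e : g*D - (g*q^2 - g^2*p^3) = -(g^2*p^3) := by rw [hD]; ring
      rw [e] at this
      exact (dvd_neg).mp this
    rcases hLZ.dvd_mul.mp hgp with hgg | hpp
    · -- L ∣ g^2 hence L ∣ g; then L ∣ D gives L ∣ q^2 hence L ∣ q, contra gcd(pq,r)=1
      have hLg : (L:ℤ) ∣ g := hLZ.dvd_of_dvd_pow hgg
      have hq2 : (L:ℤ) ∣ q^2 := (show (q^2:ℤ) = D + (2*p^3)*g by rw [hD]; ring) ▸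
        dvd_add hLD (hLg.mul_left (2*p^3))
      have hLq : (L:ℤ) ∣ q := hLZ.dvd_of_dvd_pow hq2
      have hfin := Int.dvd_gcd (hLq.mul_left p) hdr
      rw [h2] at hfin
      exact hLone (by exact_mod_cast hfin)
    · have hLp' : (L:ℤ) ∣ p := hLZ.dvd_of_dvd_pow hpp
      have hfin := Int.dvd_gcd (hLp'.mul_right q) hdr
      rw [h2] at hfin
      exact hLone (by exact_mod_cast hfin)
  -- L ∣ 6912
  have h6912 : L = 2 ∨ L = 3 := by
    have hsum : (L:ℤ) ∣ 6912*(p^4*r^4) := by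
      have := dvd_add hLA hLB
      have e : (3464*p^4*r^4 + D^2) + (3448*p^4*r^4 - D^2) = 6912*(p^4*r^4) := by ring
      rwa [e] at this
    rcases hLZ.dvd_mul.mp hsum with h | h
    · have : L ∣ 6912 := by exact_mod_cast h
      have h69 : L ∣ 2^8 * 3^3 := by norm_num; exact this
      rcases (Nat.Prime.dvd_mul hL).mp h69 with h' | h'
      · exact Or.inl ((Nat.prime_dvd_prime_iff_eq hL Nat.prime_two).mp (hL.dvd_of_dvd_pow h'))
      · exact Or.inr ((Nat.prime_dvd_prime_iff_eq hL Nat.prime_three).mp (hL.dvd_of_dvd_pow h'))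
    · rcases hLZ.dvd_mul.mp h with h' | h'
      · exact absurd (hLZ.dvd_of_dvd_pow h') hLp
      · exact absurd (hLZ.dvd_of_dvd_pow h') hLr
  rcases h6912 with rfl | rfl
  · -- L = 2 case : work mod 4
    have h2D2 : (2:ℤ) ∣ D^2 := by
      have h5 : (2:ℤ) ∣ 3464*p^4*r^4 := ⟨1732*p^4*r^4, by ring⟩
      exact (show (D^2 : ℤ) = (3464*p^4*r^4 + D^2) - 3464*p^4*r^4 by ring) ▸
        dvd_sub (by exact_mod_cast hLA) h5
    have h2D : (2:ℤ) ∣ D := hLZ.dvd_of_dvd_pow (by exact_mod_cast h2D2)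
    have h2q : (2:ℤ) ∣ q := by
      have : (2:ℤ) ∣ q^2 := (show (q^2:ℤ) = D + 2*(g*p^3) by rw [hD]; ring) ▸
        dvd_add h2D ⟨g*p^3, rfl⟩
      exact hLZ.dvd_of_dvd_pow (by exact_mod_cast this)
    have h4q2 : (4:ℤ) ∣ g*q^2 := by
      obtain ⟨k, hk⟩ := h2q
      exact ⟨g*k^2, by rw [hk]; ring⟩
    rw [h3] at h4q2
    have hcast : ((g^2*p^3 + 62209*p*r^4 : ℤ) : ZMod 4) = 0 := by
      rw [ZMod.intCast_zmod_eq_zero_iff_dvd]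
      exact_mod_cast h4q2
    push_cast at hcast
    have hp2 : ¬ (2:ℤ) ∣ p := by exact_mod_cast hLp
    have hr2 : ¬ (2:ℤ) ∣ r := by exact_mod_cast hLr
    have hpmod : (p : ZMod 4) ≠ 0 ∧ (p : ZMod 4) ≠ 2 := by
      constructor
      · intro h
        rw [ZMod.intCast_zmod_eq_zero_iff_dvd] at h
        exact hp2 (dvd_trans (by norm_num) h)
      · intro h
        have : ((p - 2 : ℤ) : ZMod 4) = 0 := by push_cast; rw [h]; ring
        rw [ZMod.intCast_zmod_eq_zero_iff_dvd] at this
        have : (2:ℤ) ∣ p - 2 := dvd_trans (by norm_num) this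
        omega
    have hrmod : (r : ZMod 4) ≠ 0 ∧ (r : ZMod 4) ≠ 2 := by
      constructor
      · intro h
        rw [ZMod.intCast_zmod_eq_zero_iff_dvd] at h
        exact hr2 (dvd_trans (by norm_num) h)
      · intro h
        have : ((r - 2 : ℤ) : ZMod 4) = 0 := by push_cast; rw [h]; ring
        rw [ZMod.intCast_zmod_eq_zero_iff_dvd] at this
        have : (2:ℤ) ∣ r - 2 := dvd_trans (by norm_num) this
        omega
    have key : ∀ a b c : ZMod 4, b ≠ 0 → b ≠ 2 → c ≠ 0 → c ≠ 2 →
        a^2*b^3 + 62209*b*c^4 ≠ 0 := by decide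
    exact key (g : ZMod 4) (p : ZMod 4) (r : ZMod 4) hpmod.1 hpmod.2 hrmod.1 hrmod.2 hcast
  · -- L = 3 case : work mod 3
    have hp3 : (p : ZMod 3) ≠ 0 := by
      rw [Ne, ZMod.intCast_zmod_eq_zero_iff_dvd]
      exact_mod_cast hLp
    have hr3 : (r : ZMod 3) ≠ 0 := by
      rw [Ne, ZMod.intCast_zmod_eq_zero_iff_dvd]
      exact_mod_cast hLr
    have hA3 : ((3464*p^4*r^4 + D^2 : ℤ) : ZMod 3) = 0 := by
      rw [ZMod.intCast_zmod_eq_zero_iff_dvd]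
      exact_mod_cast hLA
    rw [hD] at hA3
    push_cast at hA3
    have hcurve : ((g:ZMod 3))*(q:ZMod 3)^2 = (g:ZMod 3)^2*(p:ZMod 3)^3 + 62209*(p:ZMod 3)*(r:ZMod 3)^4 := by
      have : ((g*q^2 : ℤ) : ZMod 3) = ((g^2*p^3 + 62209*p*r^4 : ℤ) : ZMod 3) := by rw [h3]
      push_cast at this
      exact this
    have key : ∀ a b c d : ZMod 3, b ≠ 0 → d ≠ 0 →
        a*c^2 = a^2*b^3 + 62209*b*d^4 →
        3464*b^4*d^4 + (c^2 - 2*a*b^3)^2 ≠ 0 := by decide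
    exact key (g:ZMod 3) (p:ZMod 3) (q:ZMod 3) (r:ZMod 3) hp3 hr3 hcurve hA3
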